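/- Let n ≥ 2 be an integer. Let R ∈ SL₂(ℝ) be the rotation matrix ((cos(π/n), −sin(π/n)), (sin(π/n), cos(π/n))) and let T ∈ SL₂(ℝ) be the matrix ((1, 2(cos(π/n)+cos(π/5))/sin(π/n)), (0, 1)). Then the trace of T·R⁻¹ equals −2cos(π/5), and (T·R⁻¹)⁵ = I in SL₂(ℝ); in particular the image of T·R⁻¹ in PSL₂(ℝ) is an element of order 5. -/

import Mathlib

open Real Matrix MatrixGroups

noncomputable section

/-- `PSL₂(ℝ)`: the quotient of `SL₂(ℝ)` by its center `{±1}`. -/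
abbrev PSL2R : Type := SL(2, ℝ) ⧸ Subgroup.center SL(2, ℝ)

/-- Cayley–Hamilton for 2×2 matrices. -/
lemma sq_eq_trace_smul_sub_det_smul (A : Matrix (Fin 2) (Fin 2) ℝ) :
    A * A = (Matrix.trace A) • A - (Matrix.det A) • 1 := by
  ext i j
  fin_cases i <;> fin_cases j <;>
    simp [Matrix.mul_apply, Matrix.trace_fin_two, Matrix.det_fin_two, Fin.sum_univ_succ,
      Matrix.one_apply] <;> ring

lemma pow_five_eq_one_of (N : Matrix (Fin 2) (Fin 2) ℝ) (t : ℝ)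
    (h2 : N * N = t • N - 1) (ht : t * t = 1 - t) : N ^ 5 = 1 := by
  have ht' : (1 - t) * t = 2 * t - 1 := by linear_combination -ht
  have e4 : N ^ 4 = t • 1 - N := by
    have h4 : N ^ 4 = (N * N) * (N * N) := by
      rw [show (4:ℕ) = 2 + 2 from rfl, pow_add, pow_two]
    rw [h4, h2]
    calc (t • N - 1) * (t • N - 1)
        = (t * t) • (N * N) - t • N - t • N + 1 := by
          simp only [sub_mul, mul_sub, smul_mul_assoc, mul_smul_comm, smul_smul, one_mul,
            mul_one]
          module
      _ = (1 - t) • (t • N - 1) - t • N - t • N + 1 := by rw [ht, h2]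
      _ = ((1 - t) * t) • N - (1 - t) • 1 - t • N - t • N + 1 := by rw [smul_sub, smul_smul]
      _ = (2 * t - 1) • N - (1 - t) • 1 - t • N - t • N + 1 := by rw [ht']
      _ = t • 1 - N := by module
  have e5 : N ^ 5 = N ^ 4 * N := by rw [pow_succ]
  rw [e5, e4, sub_mul, smul_mul_assoc, one_mul, h2]
  module

/-- For `R` the rotation by `π/n` and `T = [[1, 2(cos(π/n)+cos(π/5))/sin(π/n)], [0,1]]` in
`SL₂(ℝ)`, the product `T·R⁻¹` has trace `-2cos(π/5)`, satisfies `(T·R⁻¹)⁵ = 1` in `SL₂(ℝ)`,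
and its image in `PSL₂(ℝ)` has order `5`. -/
theorem elliptic_element_of_order_five
    (n : ℕ) (hn : 2 ≤ n)
    (R T : SL(2, ℝ))
    (hR : (R : Matrix (Fin 2) (Fin 2) ℝ) =
      !![Real.cos (π / n), -Real.sin (π / n); Real.sin (π / n), Real.cos (π / n)])
    (hT : (T : Matrix (Fin 2) (Fin 2) ℝ) =
      !![1, 2 * (Real.cos (π / n) + Real.cos (π / 5)) / Real.sin (π / n); 0, 1]) :
    Matrix.trace ((T * R⁻¹ : SL(2, ℝ)) : Matrix (Fin 2) (Fin 2) ℝ) = -2 * Real.cos (π / 5) ∧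
    (T * R⁻¹) ^ 5 = 1 ∧
    orderOf (QuotientGroup.mk (T * R⁻¹) : PSL2R) = 5 := by
  set c := Real.cos (π / n) with hc
  set s := Real.sin (π / n) with hs
  set p := Real.cos (π / 5) with hp
  have hnpos : (0:ℝ) < n := by positivity
  have hspos : 0 < s := by
    apply Real.sin_pos_of_pos_of_lt_pi
    · positivity
    · calc π / n ≤ π / 2 := by
            apply div_le_div_of_nonneg_left pi_pos.le (by norm_num) (by exact_mod_cast hn)
      _ < π := by linarith [pi_pos]
  have hsne : s ≠ 0 := ne_of_gt hspos
  have hp5 : 4 * p ^ 2 - 2 * p - 1 = 0 := quadratic_root_cos_pi_div_five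
  -- the matrix of T * R⁻¹
  have hN : ((T * R⁻¹ : SL(2, ℝ)) : Matrix (Fin 2) (Fin 2) ℝ) =
      !![-c - 2 * p, s + 2 * (c + p) / s * c; -s, c] := by
    rw [Matrix.SpecialLinearGroup.coe_mul, Matrix.SpecialLinearGroup.coe_inv, hR, hT,
      Matrix.adjugate_fin_two]
    ext i j
    fin_cases i <;> fin_cases j <;>
      simp [Matrix.mul_apply, Fin.sum_univ_succ] <;> field_simp <;> ring
  have htr : Matrix.trace ((T * R⁻¹ : SL(2, ℝ)) : Matrix (Fin 2) (Fin 2) ℝ) = -2 * p := by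
    rw [hN, Matrix.trace_fin_two]; simp; ring
  have hdet : Matrix.det ((T * R⁻¹ : SL(2, ℝ)) : Matrix (Fin 2) (Fin 2) ℝ) = 1 :=
    (T * R⁻¹).property
  have ht : (-2 * p) * (-2 * p) = 1 - (-2 * p) := by nlinarith [hp5]
  have h2 : ((T * R⁻¹ : SL(2, ℝ)) : Matrix (Fin 2) (Fin 2) ℝ) *
      ((T * R⁻¹ : SL(2, ℝ)) : Matrix (Fin 2) (Fin 2) ℝ) =
      (-2 * p) • ((T * R⁻¹ : SL(2, ℝ)) : Matrix (Fin 2) (Fin 2) ℝ) - 1 := by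
    rw [sq_eq_trace_smul_sub_det_smul, htr, hdet, one_smul]
  have h5 : (T * R⁻¹) ^ 5 = 1 := by
    have hcoe : (((T * R⁻¹) ^ 5 : SL(2, ℝ)) : Matrix (Fin 2) (Fin 2) ℝ) =
        ((1 : SL(2, ℝ)) : Matrix (Fin 2) (Fin 2) ℝ) := by
      rw [Matrix.SpecialLinearGroup.coe_pow, Matrix.SpecialLinearGroup.coe_one]
      exact pow_five_eq_one_of _ _ h2 ht
    exact Subtype.coe_injective hcoe
  refine ⟨by rw [htr], h5, ?_⟩
  -- the order in PSL₂(ℝ)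
  have hq5 : (QuotientGroup.mk (T * R⁻¹) : PSL2R) ^ 5 = 1 := by
    rw [← QuotientGroup.mk_pow, h5, QuotientGroup.mk_one]
  have hdvd : orderOf (QuotientGroup.mk (T * R⁻¹) : PSL2R) ∣ 5 :=
    orderOf_dvd_of_pow_eq_one hq5
  rcases (Nat.prime_five).eq_one_or_self_of_dvd _ hdvd with h1 | h5'
  · exfalso
    have : (QuotientGroup.mk (T * R⁻¹) : PSL2R) = 1 := orderOf_eq_one_iff.mp h1
    have hmem : (T * R⁻¹) ∈ Subgroup.center SL(2, ℝ) :=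
      (QuotientGroup.eq_one_iff _).mp this
    -- commuting with the unipotent matrix forces the (1,0) entry to vanish
    set g : SL(2, ℝ) := ⟨!![1, 1; 0, 1], by simp [Matrix.det_fin_two_of]⟩ with hgdef
    have hg : g * (T * R⁻¹) = (T * R⁻¹) * g := Subgroup.mem_center_iff.mp hmem g
    have := congrArg (fun A : SL(2, ℝ) => (A : Matrix (Fin 2) (Fin 2) ℝ) 0 0) hg
    rw [Matrix.SpecialLinearGroup.coe_mul (A := g), Matrix.SpecialLinearGroup.coe_mul (B := g), hN,
      hgdef, Matrix.SpecialLinearGroup.coe_mk] at this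
    simp [Matrix.mul_apply, Fin.sum_univ_succ] at this
    exact hsne this
  · exact h5'

end
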